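/- Let C > β > 0, b > 0, s ≥ 0, m ≥ 0, D₀ ≥ 0, let t₀ ≤ t₁, and set V_∞ = (D₀ + m/(2b))/C. Let V : ℝ → ℝ be differentiable with V'(t) ≤ −C·V(t) + (1/(2b))·(s·e^{−βt} + m) + D₀ for all t ∈ [t₀, t₁], and assume V(t₀) − s·e^{−βt₀}/(2b(C−β)) − V_∞ ≥ 0. Then for all t ∈ [t₀, t₁]: V(t) ≤ (V(t₀) − V_∞)·e^{−β(t−t₀)} + V_∞. -/

import Mathlib

theorem lyapunov_exponential_convergence_on_interval (C β b s m D₀ t₀ t₁ : ℝ)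
    (hβ : 0 < β) (hCβ : β < C) (hb : 0 < b) (hs : 0 ≤ s) (hm : 0 ≤ m) (hD₀ : 0 ≤ D₀)
    (ht : t₀ ≤ t₁) (Vinf : ℝ) (hVinf : Vinf = (D₀ + m / (2 * b)) / C)
    (V : ℝ → ℝ) (hV : Differentiable ℝ V)
    (hV' : ∀ t ∈ Set.Icc t₀ t₁,
      deriv V t ≤ -C * V t + 1 / (2 * b) * (s * Real.exp (-β * t) + m) + D₀)
    (hV₀ : 0 ≤ V t₀ - s * Real.exp (-β * t₀) / (2 * b * (C - β)) - Vinf) :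
    ∀ t ∈ Set.Icc t₀ t₁,
      V t ≤ (V t₀ - Vinf) * Real.exp (-β * (t - t₀)) + Vinf := by
  have hC : 0 < C := hβ.trans hCβ
  set K := s * Real.exp (-β * t₀) / (2 * b * (C - β)) with hK
  have hKnn : 0 ≤ K := by
    apply div_nonneg (by positivity)
    nlinarith
  set Φ : ℝ → ℝ := fun x =>
    (V x - Vinf) * Real.exp (C * (x - t₀)) - K * Real.exp ((C - β) * (x - t₀)) with hΦ
  have hexp : ∀ (a x : ℝ), HasDerivAt (fun y => Real.exp (a * (y - t₀)))
      (a * Real.exp (a * (x - t₀))) x := by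
    intro a x
    have h := (Real.hasDerivAt_exp (a * (x - t₀))).comp x
      (((hasDerivAt_id x).sub_const t₀).const_mul a)
    exact (by simpa [mul_comm] using h : HasDerivAt (Real.exp ∘ fun y => a * (y - t₀)) _ x)
  have hΦderiv : ∀ x, HasDerivAt Φ
      ((deriv V x + C * (V x - Vinf)) * Real.exp (C * (x - t₀))
        - K * ((C - β) * Real.exp ((C - β) * (x - t₀)))) x := by
    intro x
    have h1 : HasDerivAt (fun y => (V y - Vinf) * Real.exp (C * (y - t₀)))
        (deriv V x * Real.exp (C * (x - t₀))
          + (V x - Vinf) * (C * Real.exp (C * (x - t₀)))) x :=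
      (((hV x).hasDerivAt).sub_const Vinf).mul (hexp C x)
    have h2 := (hexp (C - β) x).const_mul K
    have := h1.sub h2
    exact this.congr_deriv (by ring)
  have hbne : b ≠ 0 := hb.ne'
  have hcbne : C - β ≠ 0 := sub_ne_zero.mpr (ne_of_gt hCβ)
  have hCne : C ≠ 0 := hC.ne'
  have hCVinf : C * Vinf = D₀ + m / (2 * b) := by
    rw [hVinf]; field_simp
  have hΦmono : AntitoneOn Φ (Set.Icc t₀ t₁) := by
    apply antitoneOn_of_deriv_nonpos (convex_Icc t₀ t₁)
    · exact Continuous.continuousOn (by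
        have : Differentiable ℝ Φ := fun x => (hΦderiv x).differentiableAt
        exact this.continuous)
    · intro x hx
      exact (hΦderiv x).differentiableAt.differentiableWithinAt
    · intro x hx
      have hx' : x ∈ Set.Icc t₀ t₁ := by
        rw [interior_Icc] at hx
        exact ⟨hx.1.le, hx.2.le⟩
      rw [(hΦderiv x).deriv]
      have hd := hV' x hx'
      have hsum : deriv V x + C * (V x - Vinf) ≤ s * Real.exp (-β * x) / (2 * b) := by
        have hexpand : 1 / (2 * b) * (s * Real.exp (-β * x) + m)
            = s * Real.exp (-β * x) / (2 * b) + m / (2 * b) := by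
          field_simp
        have hlin : C * (V x - Vinf) = C * V x - C * Vinf := by ring
        linarith [hd, hCVinf, hexpand, hlin]
      have hE : (0:ℝ) < Real.exp (C * (x - t₀)) := Real.exp_pos _
      have hkey : Real.exp (-β * x) * Real.exp (C * (x - t₀))
          = Real.exp (-β * t₀) * Real.exp ((C - β) * (x - t₀)) := by
        rw [← Real.exp_add, ← Real.exp_add]; ring_nf
      have hKc : K * (C - β) = s * Real.exp (-β * t₀) / (2 * b) := by
        rw [hK]; field_simp
      have h1 : (deriv V x + C * (V x - Vinf)) * Real.exp (C * (x - t₀))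
          ≤ s * Real.exp (-β * x) / (2 * b) * Real.exp (C * (x - t₀)) := by
        exact mul_le_mul_of_nonneg_right hsum hE.le
      have h2 : s * Real.exp (-β * x) / (2 * b) * Real.exp (C * (x - t₀))
          = K * ((C - β) * Real.exp ((C - β) * (x - t₀))) := by
        calc s * Real.exp (-β * x) / (2 * b) * Real.exp (C * (x - t₀))
            = s * (Real.exp (-β * x) * Real.exp (C * (x - t₀))) / (2 * b) := by ring
          _ = s * (Real.exp (-β * t₀) * Real.exp ((C - β) * (x - t₀))) / (2 * b) := by
              rw [hkey]
          _ = (K * (C - β)) * Real.exp ((C - β) * (x - t₀)) := by rw [hKc]; ring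
          _ = K * ((C - β) * Real.exp ((C - β) * (x - t₀))) := by ring
      linarith [h1, h2.le]
  intro t htm
  obtain ⟨ht₀, ht₁⟩ := htm
  have hmono := hΦmono (Set.left_mem_Icc.2 ht) ⟨ht₀, ht₁⟩ ht₀
  have hΦt₀ : Φ t₀ = V t₀ - Vinf - K := by simp [hΦ]
  have hE : (0:ℝ) < Real.exp (C * (t - t₀)) := Real.exp_pos _
  have hE2 : (1:ℝ) ≤ Real.exp ((C - β) * (t - t₀)) := by
    apply Real.one_le_exp
    nlinarith
  have hprod : Real.exp (-β * (t - t₀)) * Real.exp (C * (t - t₀))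
      = Real.exp ((C - β) * (t - t₀)) := by
    rw [← Real.exp_add]; ring_nf
  have hΦt : (V t - Vinf) * Real.exp (C * (t - t₀))
      - K * Real.exp ((C - β) * (t - t₀)) ≤ V t₀ - Vinf - K := by
    rw [← hΦt₀]; exact hmono
  have hgoal : (V t - Vinf) * Real.exp (C * (t - t₀))
      ≤ (V t₀ - Vinf) * Real.exp (-β * (t - t₀)) * Real.exp (C * (t - t₀)) := by
    have h0 : 0 ≤ V t₀ - Vinf - K := by linarith [hV₀]
    have : (V t₀ - Vinf) * Real.exp (-β * (t - t₀)) * Real.exp (C * (t - t₀))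
        = (V t₀ - Vinf - K) * Real.exp ((C - β) * (t - t₀))
          + K * Real.exp ((C - β) * (t - t₀)) := by
      rw [mul_assoc, hprod]; ring
    rw [this]
    nlinarith [hΦt, hE2, h0, hKnn]
  have := le_of_mul_le_mul_right (by linarith [hgoal] : (V t - Vinf) * Real.exp (C * (t - t₀)) ≤ ((V t₀ - Vinf) * Real.exp (-β * (t - t₀))) * Real.exp (C * (t - t₀))) hE
  linarith
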